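/- There exist η ∈ (2/3, √3 − 1), unit vectors n̂_1, n̂_2, n̂_3 ∈ ℝ³, a 2×2 density matrix ρ (positive semidefinite with trace 1), and for each pair (ij) ∈ {(12),(23),(13)} a four-outcome POVM G^{ij} = {G^{ij}_{X_iX_j}}_{X_i,X_j∈{+1,−1}} on ℂ² whose marginals are the noisy qubit POVMs M_i and M_j (i.e. Σ_{X_j} G^{ij}_{X_iX_j} = E^i_{X_i} and Σ_{X_i} G^{ij}_{X_iX_j} = E^j_{X_j}, where E^k_{X_k} = ½ I + ½ η X_k σ·n̂_k), such that: (1) the triple M_1, M_2, M_3 admits no triplewise joint POVM; and (2) the average anticorrelation violates the LSW bound: (1/3) Σ_{(ij)} Tr(ρ (G^{ij}_{+−} + G^{ij}_{−+})) > 1 − η/3. In particular this can be achieved with trine axes n̂_i·n̂_j = −1/2 coplanar in the z–x plane of the Bloch sphere. -/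

import Mathlib

open scoped BigOperators ComplexOrder RealInnerProductSpace Matrix

/-- The Pauli vector `σ·n = n_x σ_x + n_y σ_y + n_z σ_z`. -/
noncomputable def sigmaDot (v : EuclideanSpace ℝ (Fin 3)) : Matrix (Fin 2) (Fin 2) ℂ :=
  (v 0 : ℂ) • (!![0, 1; 1, 0] : Matrix (Fin 2) (Fin 2) ℂ) +
    (v 1 : ℂ) • (!![0, -Complex.I; Complex.I, 0] : Matrix (Fin 2) (Fin 2) ℂ) +
    (v 2 : ℂ) • (!![1, 0; 0, -1] : Matrix (Fin 2) (Fin 2) ℂ)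

/-- The sign `+1`/`-1` encoded by a Boolean. -/
noncomputable def sgn (b : Bool) : ℝ := if b then 1 else -1

/-- The noisy qubit POVM element `E^k_X = ½ I + ½ η X σ·n̂`. -/
noncomputable def noisyQubitEffect (η : ℝ) (v : EuclideanSpace ℝ (Fin 3)) (b : Bool) :
    Matrix (Fin 2) (Fin 2) ℂ :=
  ((1 : ℂ) / 2) • (1 : Matrix (Fin 2) (Fin 2) ℂ) + (((η * sgn b) / 2 : ℝ) : ℂ) • sigmaDot v

noncomputable def nv : Fin 3 → EuclideanSpace ℝ (Fin 3) :=
  ![!₂[0, 0, 1], !₂[Real.sqrt 3 / 2, 0, -(1/2)], !₂[-(Real.sqrt 3 / 2), 0, -(1/2)]]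

noncomputable def mv : EuclideanSpace ℝ (Fin 3) := !₂[0, -(17/50), 0]

lemma sigmaDot_add (x y : EuclideanSpace ℝ (Fin 3)) :
    sigmaDot (x + y) = sigmaDot x + sigmaDot y := by
  simp only [sigmaDot, PiLp.add_apply, Complex.ofReal_add]
  module

lemma sigmaDot_smul (r : ℝ) (x : EuclideanSpace ℝ (Fin 3)) :
    sigmaDot (r • x) = (r : ℂ) • sigmaDot x := by
  simp only [sigmaDot, PiLp.smul_apply, smul_eq_mul, Complex.ofReal_mul]
  module

lemma nv_norm : ∀ i, ‖nv i‖ = 1 := by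
  have h3 : Real.sqrt 3 ^ 2 = 3 := Real.sq_sqrt (by norm_num)
  intro i
  have key : ∑ j, ‖nv i j‖ ^ 2 = 1 := by
    fin_cases i <;> simp [Fin.sum_univ_three, nv, sq_abs] <;>
      linear_combination (1/4 : ℝ) * h3
  rw [EuclideanSpace.norm_eq, key, Real.sqrt_one]

lemma nv_inner : ∀ i j, i ≠ j → ⟪nv i, nv j⟫ = -(1/2 : ℝ) := by
  intro i j hij
  fin_cases i <;> fin_cases j <;> simp_all [PiLp.inner_apply, Fin.sum_univ_three, nv] <;>
    linear_combination (-(1/4) : ℝ) * Real.mul_self_sqrt (show (0:ℝ) ≤ 3 by norm_num)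

lemma nv_y : ∀ i, nv i 1 = 0 := by
  intro i; fin_cases i <;> simp [nv]

/-- scalar part of the joint POVM element -/
noncomputable def gc (a b : Bool) : ℝ := (1 + sgn a * sgn b * (-(23/100))) / 4

/-- Bloch vector part of the joint POVM element -/
noncomputable def gw (i j : Fin 3) (a b : Bool) : EuclideanSpace ℝ (Fin 3) :=
  (17/25 * sgn a / 4) • nv i + (17/25 * sgn b / 4) • nv j + (sgn a * sgn b / 4) • mv

noncomputable def Gd (i j : Fin 3) (a b : Bool) : Matrix (Fin 2) (Fin 2) ℂ :=
  ((gc a b : ℝ) : ℂ) • 1 + sigmaDot (gw i j a b)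

lemma Gd_marg_right (i j : Fin 3) (a : Bool) :
    ∑ b : Bool, Gd i j a b = noisyQubitEffect (17/25) (nv i) a := by
  rw [Fintype.sum_bool]
  simp only [Gd, gc, gw, noisyQubitEffect, sigmaDot_add, sigmaDot_smul, sgn]
  cases a <;> simp <;> push_cast <;> module

lemma Gd_marg_left (i j : Fin 3) (b : Bool) :
    ∑ a : Bool, Gd i j a b = noisyQubitEffect (17/25) (nv j) b := by
  rw [Fintype.sum_bool]
  simp only [Gd, gc, gw, noisyQubitEffect, sigmaDot_add, sigmaDot_smul, sgn]
  cases b <;> simp <;> push_cast <;> module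

lemma Gd_total (i j : Fin 3) : (∑ a : Bool, ∑ b : Bool, Gd i j a b) = 1 := by
  simp only [Fintype.sum_bool, Gd, gc, gw, sigmaDot_add, sigmaDot_smul, sgn]
  simp <;> push_cast <;> module
lemma sigmaDot_eq (v : EuclideanSpace ℝ (Fin 3)) :
    sigmaDot v = !![(v 2 : ℂ), (v 0 : ℂ) - (v 1 : ℂ) * Complex.I;
                    (v 0 : ℂ) + (v 1 : ℂ) * Complex.I, -(v 2 : ℂ)] := by
  ext i j
  fin_cases i <;> fin_cases j <;>
    simp [sigmaDot, Matrix.add_apply, Matrix.smul_apply] <;> ring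


lemma cs3 (x1 x2 x3 y1 y2 y3 : ℝ) :
    (x1*y1+x2*y2+x3*y3)^2 ≤ (x1^2+x2^2+x3^2)*(y1^2+y2^2+y3^2) := by
  nlinarith [sq_nonneg (x1*y2-x2*y1), sq_nonneg (x1*y3-x3*y1), sq_nonneg (x2*y3-x3*y2)]


lemma key_abs (α w2 w0 w1 h1 h2 h3 s : ℝ) (hα : 0 ≤ α) (hs : 0 ≤ s)
    (hid : h1^2+h2^2+h3^2 = s^2) (hw : w0^2+w1^2+w2^2 ≤ α^2) :
    0 ≤ α*s + (w2*h1 + w0*h2 + w1*h3) := by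
  have cs := cs3 w2 w0 w1 h1 h2 h3
  rw [hid] at cs
  have h2' : (w2*h1+w0*h2+w1*h3)^2 ≤ α^2 * s^2 :=
    le_trans cs (by nlinarith [sq_nonneg s])
  nlinarith [sq_nonneg (w2*h1+w0*h2+w1*h3 + α*s), mul_nonneg hα hs]

lemma psd_main (α : ℝ) (w : EuclideanSpace ℝ (Fin 3)) (hα : 0 ≤ α)
    (h : w 0 ^ 2 + w 1 ^ 2 + w 2 ^ 2 ≤ α ^ 2) :
    ((α : ℂ) • (1 : Matrix (Fin 2) (Fin 2) ℂ) + sigmaDot w).PosSemidef := by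
  set M := (α : ℂ) • (1 : Matrix (Fin 2) (Fin 2) ℂ) + sigmaDot w with hM
  have hMeq : M = !![(α : ℂ) + (w 2 : ℂ), (w 0 : ℂ) - (w 1 : ℂ) * Complex.I;
      (w 0 : ℂ) + (w 1 : ℂ) * Complex.I, (α : ℂ) - (w 2 : ℂ)] := by
    rw [hM, sigmaDot_eq]
    ext i j
    fin_cases i <;> fin_cases j <;>
      simp [Matrix.add_apply, Matrix.smul_apply, Matrix.one_apply] <;> try ring
  refine Matrix.posSemidef_iff_dotProduct_mulVec.mpr ⟨?_, ?_⟩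
  · rw [hMeq]
    ext i j
    fin_cases i <;> fin_cases j <;>
      simp [Matrix.conjTranspose_apply, Complex.ext_iff]
  · intro x
    set a := (x 0).re with ha; set b := (x 0).im with hb
    set c := (x 1).re with hc; set d := (x 1).im with hd
    have key : 0 ≤ α * (a^2+b^2+c^2+d^2) + (w 2 * (a^2+b^2-c^2-d^2)
        + w 0 * (2*(a*c+b*d)) + w 1 * (2*(a*d-b*c))) := by
      have := key_abs α (w 2) (w 0) (w 1) (a^2+b^2-c^2-d^2) (2*(a*c+b*d)) (2*(a*d-b*c))
        (a^2+b^2+c^2+d^2) hα (by positivity) (by ring) (by linarith)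
      linarith
    have hE : star x ⬝ᵥ M *ᵥ x = ((α * (a^2+b^2+c^2+d^2) + (w 2 * (a^2+b^2-c^2-d^2)
        + w 0 * (2*(a*c+b*d)) + w 1 * (2*(a*d-b*c))) : ℝ) : ℂ) := by
      rw [hMeq]
      apply Complex.ext <;>
        simp [dotProduct, Matrix.mulVec, Fin.sum_univ_two, Pi.star_apply,
          Complex.add_re, Complex.add_im, Complex.mul_re, Complex.mul_im, ← Complex.ofReal_pow, ha, hb, hc, hd] <;>
        push_cast <;> ring
    rw [hE]
    exact_mod_cast Complex.zero_le_real.mpr key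

lemma Gd_psd (i j : Fin 3) (hij : i < j) (a b : Bool) : (Gd i j a b).PosSemidef := by
  refine psd_main _ _ ?_ ?_
  · cases a <;> cases b <;> norm_num [gc, sgn]
  · fin_cases i <;> fin_cases j <;> simp at hij <;> cases a <;> cases b <;>
      simp [gw, gc, nv, mv, sgn, PiLp.add_apply, PiLp.smul_apply] <;>
      nlinarith [Real.sq_sqrt (show (0:ℝ) ≤ 3 by norm_num), Real.sqrt_nonneg 3]

noncomputable def yv : EuclideanSpace ℝ (Fin 3) := !₂[0, 1/2, 0]
noncomputable def rho : Matrix (Fin 2) (Fin 2) ℂ := (((1:ℝ)/2 : ℝ) : ℂ) • 1 + sigmaDot yv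

lemma rho_psd : rho.PosSemidef := by
  refine psd_main _ _ (by norm_num) ?_
  simp [yv]

lemma rho_trace : rho.trace = 1 := by
  simp [rho, Matrix.trace, Fin.sum_univ_two, sigmaDot, yv, Matrix.smul_apply,
    Matrix.add_apply, Matrix.one_apply]
  norm_num

lemma pair_sum (i j : Fin 3) : Gd i j true false + Gd i j false true
    = (((123:ℝ)/200 : ℝ) : ℂ) • 1 + sigmaDot ((-(1/2) : ℝ) • mv) := by
  simp only [Gd, gc, gw, sgn, sigmaDot_add, sigmaDot_smul]
  norm_num
  push_cast
  module

lemma tr_pair (i j : Fin 3) :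
    (rho * (Gd i j true false + Gd i j false true)).trace.re = 157/200 := by
  rw [pair_sum]
  simp [rho, Matrix.trace, Fin.sum_univ_two, Matrix.mul_apply, sigmaDot, yv, mv,
    Matrix.smul_apply, Matrix.add_apply, Matrix.one_apply, PiLp.smul_apply]
  norm_num [Complex.I_re, Complex.I_im]

lemma trace_re_nonneg {M : Matrix (Fin 2) (Fin 2) ℂ} (hM : M.PosSemidef) :
    0 ≤ M.trace.re := by
  have h0 := hM.re_dotProduct_nonneg (Pi.single 0 1)
  have h1 := hM.re_dotProduct_nonneg (Pi.single 1 1)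
  simp [dotProduct, Matrix.mulVec, Pi.single_apply, Fin.sum_univ_two] at h0 h1
  simp [Matrix.trace, Matrix.diag, Fin.sum_univ_two]
  linarith

open scoped MatrixOrder in
lemma trace_mul_re_nonneg {A B : Matrix (Fin 2) (Fin 2) ℂ}
    (hA : A.PosSemidef) (hB : B.PosSemidef) : 0 ≤ (A * B).trace.re := by
  obtain ⟨C, rfl⟩ : ∃ C : Matrix (Fin 2) (Fin 2) ℂ, B = Cᴴ * C :=
    CStarAlgebra.nonneg_iff_eq_star_mul_self.mp hB.nonneg
  have h : (A * (Cᴴ * C)).trace = (C * A * Cᴴ).trace := by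
    rw [← Matrix.mul_assoc, Matrix.trace_mul_comm, Matrix.mul_assoc]
  rw [h]
  exact trace_re_nonneg (hA.mul_mul_conjTranspose_same C)


noncomputable def cvec (f : Fin 3 → Bool) : EuclideanSpace ℝ (Fin 3) :=
  sgn (f 0) • nv 0 + sgn (f 1) • nv 1 + sgn (f 2) • nv 2

lemma sigmaDot_neg (x : EuclideanSpace ℝ (Fin 3)) : sigmaDot (-x) = -sigmaDot x := by
  rw [show -x = (-1 : ℝ) • x by module, sigmaDot_smul]; push_cast; module

lemma sigma_sq_trace : ∀ i : Fin 3, (sigmaDot (nv i) * sigmaDot (nv i)).trace = 2 := by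
  have h3c : ((Real.sqrt 3 : ℝ) : ℂ) * ((Real.sqrt 3 : ℝ) : ℂ) = 3 := by
    rw [← Complex.ofReal_mul, Real.mul_self_sqrt (by norm_num)]; norm_num
  intro i
  fin_cases i <;>
    simp [sigmaDot, nv, Matrix.trace, Matrix.mul_apply, Fin.sum_univ_two,
      Matrix.smul_apply, Matrix.add_apply] <;> push_cast <;>
    first
    | linear_combination (0:ℂ) * h3c
    | linear_combination (1/2 : ℂ) * h3c

lemma cvec_norm (f : Fin 3 → Bool) :
    (-cvec f) 0 ^ 2 + (-cvec f) 1 ^ 2 + (-cvec f) 2 ^ 2 ≤ (2:ℝ)^2 := by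
  have h3 : Real.sqrt 3 * Real.sqrt 3 = 3 := Real.mul_self_sqrt (by norm_num)
  cases h0 : f 0 <;> cases h1 : f 1 <;> cases h2 : f 2 <;>
    simp [cvec, nv, sgn, h0, h1, h2, PiLp.add_apply, PiLp.smul_apply] <;>
    nlinarith [Real.sqrt_nonneg 3]

lemma no_triple :
    ¬ ∃ T : (Fin 3 → Bool) → Matrix (Fin 2) (Fin 2) ℂ,
        (∀ f, (T f).PosSemidef) ∧ (∑ f, T f = 1) ∧
        ∀ i a, ∑ f ∈ Finset.univ.filter (fun f => f i = a), T f
            = noisyQubitEffect (17/25) (nv i) a := by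
  rintro ⟨T, hpsd, hsum, hmarg⟩
  -- signed sums
  have hA : ∀ i : Fin 3, ∑ f : Fin 3 → Bool, ((sgn (f i) : ℝ) : ℂ) • T f
      = ((17/25 : ℝ) : ℂ) • sigmaDot (nv i) := by
    intro i
    rw [← Finset.sum_filter_add_sum_filter_not Finset.univ (fun f => f i = true)]
    have h1 : ∑ f ∈ Finset.univ.filter (fun f => f i = true), ((sgn (f i) : ℝ) : ℂ) • T f
        = ∑ f ∈ Finset.univ.filter (fun f => f i = true), T f := by
      refine Finset.sum_congr rfl fun f hf => ?_
      simp only [Finset.mem_filter] at hf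
      simp [hf.2, sgn]
    have h2 : ∑ f ∈ Finset.univ.filter (fun f => ¬ f i = true), ((sgn (f i) : ℝ) : ℂ) • T f
        = -∑ f ∈ Finset.univ.filter (fun f => f i = false), T f := by
      rw [← Finset.sum_neg_distrib]
      refine Finset.sum_congr (by ext f; simp) fun f hf => ?_
      simp only [Finset.mem_filter, Bool.not_eq_true] at hf
      simp [hf.2, sgn]
    rw [h1, h2, hmarg i true, hmarg i false]
    simp only [noisyQubitEffect, sgn]
    simp
    push_cast
    module
  have hTsum : ∀ i : Fin 3, ∑ f : Fin 3 → Bool, ((sgn (f i) : ℝ) : ℂ) • (T f * sigmaDot (nv i))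
      = ((17/25 : ℝ) : ℂ) • (sigmaDot (nv i) * sigmaDot (nv i)) := by
    intro i
    have : (∑ f : Fin 3 → Bool, ((sgn (f i) : ℝ) : ℂ) • T f) * sigmaDot (nv i)
        = ((17/25 : ℝ) : ℂ) • sigmaDot (nv i) * sigmaDot (nv i) := by rw [hA i]
    rw [Finset.sum_mul] at this
    simpa [Matrix.smul_mul] using this
  have hti : ∀ i : Fin 3, ∑ f : Fin 3 → Bool,
      ((sgn (f i) : ℝ) : ℂ) * (T f * sigmaDot (nv i)).trace = ((17/25 : ℝ) : ℂ) * 2 := by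
    intro i
    have := congrArg Matrix.trace (hTsum i)
    rw [Matrix.trace_sum] at this
    simpa [Matrix.trace_smul, smul_eq_mul, sigma_sq_trace i] using this
  have hper : ∀ f : Fin 3 → Bool, (T f * sigmaDot (cvec f)).trace
      = ((sgn (f 0) : ℝ) : ℂ) * (T f * sigmaDot (nv 0)).trace
      + ((sgn (f 1) : ℝ) : ℂ) * (T f * sigmaDot (nv 1)).trace
      + ((sgn (f 2) : ℝ) : ℂ) * (T f * sigmaDot (nv 2)).trace := by
    intro f
    simp [cvec, sigmaDot_add, sigmaDot_smul, Matrix.mul_add, Matrix.mul_smul,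
      Matrix.trace_add, Matrix.trace_smul, smul_eq_mul]
  have hS : ∑ f : Fin 3 → Bool, (T f * sigmaDot (cvec f)).trace = ((102:ℝ)/25 : ℂ) := by
    rw [Finset.sum_congr rfl fun f _ => hper f]
    rw [Finset.sum_add_distrib, Finset.sum_add_distrib, hti 0, hti 1, hti 2]
    norm_num
  have hub : ∀ f : Fin 3 → Bool,
      (T f * sigmaDot (cvec f)).trace.re ≤ 2 * (T f).trace.re := by
    intro f
    have hW : (((2:ℝ) : ℂ) • (1 : Matrix (Fin 2) (Fin 2) ℂ) + sigmaDot (-cvec f)).PosSemidef :=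
      psd_main 2 (-cvec f) (by norm_num) (cvec_norm f)
    have h0 := trace_mul_re_nonneg (hpsd f) hW
    have hexp : T f * (((2:ℝ) : ℂ) • (1 : Matrix (Fin 2) (Fin 2) ℂ) + sigmaDot (-cvec f))
        = ((2:ℝ) : ℂ) • T f - T f * sigmaDot (cvec f) := by
      rw [sigmaDot_neg]
      simp [Matrix.mul_add, Matrix.mul_smul, mul_smul_comm, sub_eq_add_neg]
    rw [hexp] at h0
    simp only [Matrix.trace_sub, Matrix.trace_smul, smul_eq_mul, Complex.sub_re,
      Complex.mul_re, Complex.ofReal_re, Complex.ofReal_im] at h0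
    linarith
  have h1 : (∑ f : Fin 3 → Bool, (T f * sigmaDot (cvec f)).trace).re
      = ∑ f : Fin 3 → Bool, (T f * sigmaDot (cvec f)).trace.re := by
    simp [Complex.re_sum]
  rw [hS] at h1
  have h2 : ∑ f : Fin 3 → Bool, (T f * sigmaDot (cvec f)).trace.re
      ≤ ∑ f : Fin 3 → Bool, 2 * (T f).trace.re :=
    Finset.sum_le_sum fun f _ => hub f
  have h3 : ∑ f : Fin 3 → Bool, 2 * (T f).trace.re = 2 * (∑ f : Fin 3 → Bool, T f).trace.re := by
    rw [Matrix.trace_sum, Complex.re_sum, Finset.mul_sum]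
  rw [hsum] at h3
  have h4 : ((1 : Matrix (Fin 2) (Fin 2) ℂ)).trace.re = 2 := by
    simp [Matrix.trace_one]
  rw [h4] at h3
  have : ((102:ℝ)/25 : ℂ).re = 102/25 := by norm_num
  rw [this] at h1
  linarith

/-- **Quantum violation of the LSW inequality.** There exist a sharpness `η ∈ (2/3, √3 − 1)`,
trine measurement directions coplanar in the z–x plane of the Bloch sphere, a qubit state `ρ`,
and pairwise joint POVMs `G^{ij}` marginalizing to the noisy qubit POVMs `M_i, M_j`, such that
the three POVMs admit no triplewise joint POVM and the average anticorrelation probability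
exceeds the LSW bound `1 − η/3`. -/
theorem lsw_inequality_quantum_violation :
    ∃ η : ℝ, (2 / 3 < η ∧ η < Real.sqrt 3 - 1) ∧
    ∃ nhat : Fin 3 → EuclideanSpace ℝ (Fin 3),
      (∀ i, ‖nhat i‖ = 1) ∧
      (∀ i j, i ≠ j → ⟪nhat i, nhat j⟫ = -(1 / 2)) ∧
      (∀ i, nhat i 1 = 0) ∧
      ∃ ρ : Matrix (Fin 2) (Fin 2) ℂ, ρ.PosSemidef ∧ ρ.trace = 1 ∧
      ∃ G : Fin 3 → Fin 3 → Bool → Bool → Matrix (Fin 2) (Fin 2) ℂ,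
        (∀ i j, i < j →
          (∀ a b, (G i j a b).PosSemidef) ∧
          (∑ a : Bool, ∑ b : Bool, G i j a b) = 1 ∧
          (∀ a, ∑ b : Bool, G i j a b = noisyQubitEffect η (nhat i) a) ∧
          (∀ b, ∑ a : Bool, G i j a b = noisyQubitEffect η (nhat j) b)) ∧
        (¬ ∃ T : (Fin 3 → Bool) → Matrix (Fin 2) (Fin 2) ℂ,
            (∀ f, (T f).PosSemidef) ∧ (∑ f, T f = 1) ∧
            ∀ i a, ∑ f ∈ Finset.univ.filter (fun f => f i = a), T f
                = noisyQubitEffect η (nhat i) a) ∧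
        1 - η / 3 <
          (1 / 3 : ℝ) * ((ρ * (G 0 1 true false + G 0 1 false true)).trace.re +
            (ρ * (G 1 2 true false + G 1 2 false true)).trace.re +
            (ρ * (G 0 2 true false + G 0 2 false true)).trace.re) := by
  refine ⟨17/25, ⟨by norm_num, ?_⟩, nv, nv_norm, nv_inner, nv_y, rho, rho_psd, rho_trace,
    Gd, fun i j hij => ⟨Gd_psd i j hij, Gd_total i j, Gd_marg_right i j, Gd_marg_left i j⟩,
    no_triple, ?_⟩
  · nlinarith [Real.sq_sqrt (show (0:ℝ) ≤ 3 by norm_num), Real.sqrt_nonneg 3]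
  · rw [tr_pair 0 1, tr_pair 1 2, tr_pair 0 2]
    norm_num
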